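/- arXiv:1909.11860 — 2 statements merged into one kernel-verified Lean document; each statement's English description precedes it below -/
import Mathlib

section
/- Let G be a simple graph on n vertices. Then mcut(G) ≤ (n/4)·s_A(G), where s_A(G) = λ_1(G) - λ_n(G) is the spread of the adjacency matrix. -/
open Finset Matrix BigOperators

set_option linter.unusedSectionVars false

variable {V : Type*} [Fintype V] [DecidableEq V]

/-- Number of edges of `G` with exactly one endpoint in `S` (each unordered edge counted once,
as the ordered pair going out of `S`). -/
def cutNum (G : SimpleGraph V) [DecidableRel G.Adj] (S : Finset V) : ℕ :=
  (Finset.univ.filter (fun p : V × V => G.Adj p.1 p.2 ∧ p.1 ∈ S ∧ p.2 ∉ S)).card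

/-- Number of edges of `G` with both endpoints in `S` or both outside `S`. -/
def cohNum (G : SimpleGraph V) [DecidableRel G.Adj] (S : Finset V) : ℕ :=
  G.edgeFinset.card - cutNum G S

/-- The maximum cut of `G`. -/
def mcut (G : SimpleGraph V) [DecidableRel G.Adj] : ℕ :=
  Finset.univ.sup (fun S : Finset V => cutNum G S)

/-- The ±1 partition vector of a vertex subset `S`. -/
def pvec (S : Finset V) : V → ℝ := fun v => if v ∈ S then 1 else -1

/-- The signless Laplacian matrix `Q = D + A` of a graph. -/
def signlessLap (G : SimpleGraph V) [DecidableRel G.Adj] : Matrix V V ℝ :=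
  G.degMatrix ℝ + G.adjMatrix ℝ

lemma isHermitian_adj (G : SimpleGraph V) [DecidableRel G.Adj] :
    (G.adjMatrix ℝ).IsHermitian := by
  rw [IsHermitian, conjTranspose_eq_transpose_of_trivial]
  exact SimpleGraph.isSymm_adjMatrix G

lemma isHermitian_lap (G : SimpleGraph V) [DecidableRel G.Adj] :
    (G.lapMatrix ℝ).IsHermitian := by
  rw [IsHermitian, conjTranspose_eq_transpose_of_trivial]
  exact G.isSymm_lapMatrix ℝ

lemma isHermitian_signlessLap (G : SimpleGraph V) [DecidableRel G.Adj] :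
    (signlessLap G).IsHermitian := by
  rw [IsHermitian, conjTranspose_eq_transpose_of_trivial]
  exact (G.isSymm_degMatrix ℝ).add (SimpleGraph.isSymm_adjMatrix G)

/-- The spanning subgraph of `G` consisting of the edges between `S` and its complement. -/
def crossGraph (G : SimpleGraph V) (S : Finset V) : SimpleGraph V where
  Adj u v := G.Adj u v ∧ ((u ∈ S) ↔ (v ∉ S))
  symm := ⟨fun u v h => ⟨h.1.symm, by tauto⟩⟩
  loopless := ⟨fun v h => G.loopless.1 v h.1⟩

/-- The spanning subgraph of `G` consisting of the edges inside `S` or inside its complement. -/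
def insideGraph (G : SimpleGraph V) (S : Finset V) : SimpleGraph V where
  Adj u v := G.Adj u v ∧ ((u ∈ S) ↔ (v ∈ S))
  symm := ⟨fun u v h => ⟨h.1.symm, h.2.symm⟩⟩
  loopless := ⟨fun v h => G.loopless.1 v h.1⟩

instance (G : SimpleGraph V) [DecidableRel G.Adj] (S : Finset V) :
    DecidableRel (crossGraph G S).Adj := fun _ _ => inferInstanceAs (Decidable (_ ∧ _))

instance (G : SimpleGraph V) [DecidableRel G.Adj] (S : Finset V) :
    DecidableRel (insideGraph G S).Adj := fun _ _ => inferInstanceAs (Decidable (_ ∧ _))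

/-- The second largest value (with multiplicity) of a finitely indexed family of reals. -/
noncomputable def secondLargest (f : V → ℝ) : ℝ :=
  (Multiset.sort (Finset.univ.val.map f) (· ≤ ·)).getD (Fintype.card V - 2) 0

/-- The join of two graphs: disjoint union plus all edges in between. -/
def joinGraph {α β : Type*} (H₁ : SimpleGraph α) (H₂ : SimpleGraph β) :
    SimpleGraph (α ⊕ β) where
  Adj x y :=
    match x, y with
    | Sum.inl u, Sum.inl v => H₁.Adj u v
    | Sum.inr u, Sum.inr v => H₂.Adj u v
    | Sum.inl _, Sum.inr _ => True
    | Sum.inr _, Sum.inl _ => True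
  symm := ⟨by rintro (u | u) (v | v) h <;> first | exact h.symm | trivial⟩
  loopless := ⟨by
    rintro (u | u) h
    · exact H₁.loopless.1 u h
    · exact H₂.loopless.1 u h⟩

instance {α β : Type*} (H₁ : SimpleGraph α) (H₂ : SimpleGraph β)
    [DecidableRel H₁.Adj] [DecidableRel H₂.Adj] :
    DecidableRel (joinGraph H₁ H₂).Adj := fun x y =>
  match x, y with
  | Sum.inl u, Sum.inl v => inferInstanceAs (Decidable (H₁.Adj u v))
  | Sum.inr u, Sum.inr v => inferInstanceAs (Decidable (H₂.Adj u v))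
  | Sum.inl _, Sum.inr _ => inferInstanceAs (Decidable True)
  | Sum.inr _, Sum.inl _ => inferInstanceAs (Decidable True)

lemma star_eq_transpose (U : Matrix V V ℝ) : star U = Uᵀ := by
  ext i j; simp [star, conjTranspose, Matrix.map]

lemma quad_expand (A : Matrix V V ℝ) (hA : A.IsHermitian) (x : V → ℝ) :
    ∃ y : V → ℝ, x ⬝ᵥ A *ᵥ x = ∑ i, hA.eigenvalues i * (y i)^2 ∧ x ⬝ᵥ x = ∑ i, (y i)^2 := by
  set U := (hA.eigenvectorUnitary : Matrix V V ℝ) with hU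
  refine ⟨star U *ᵥ x, ?_, ?_⟩
  · conv_lhs => rw [hA.spectral_theorem, Unitary.conjStarAlgAut_apply]
    rw [← mulVec_mulVec, ← mulVec_mulVec, dotProduct_mulVec]
    rw [← mulVec_transpose]
    rw [star_eq_transpose]
    simp [mulVec_diagonal, dotProduct, Function.comp, mul_comm, sq, mul_assoc, mul_left_comm]
  · have h2 : (star U *ᵥ x) ⬝ᵥ (star U *ᵥ x) = x ⬝ᵥ x := by
      rw [dotProduct_mulVec, ← mulVec_transpose, star_eq_transpose, transpose_transpose,
        mulVec_mulVec]
      have : U * Uᵀ = 1 := by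
        have := (Matrix.mem_unitaryGroup_iff).mp hA.eigenvectorUnitary.2
        rwa [star_eq_transpose] at this
      rw [this, one_mulVec]
    rw [← h2]
    simp [dotProduct, sq]

lemma rayleigh_le (A : Matrix V V ℝ) (hA : A.IsHermitian) (x : V → ℝ) :
    x ⬝ᵥ A *ᵥ x ≤ (⨆ i, hA.eigenvalues i) * (x ⬝ᵥ x) := by
  obtain ⟨y, h1, h2⟩ := quad_expand A hA x
  rw [h1, h2, Finset.mul_sum]
  refine Finset.sum_le_sum fun i _ => ?_
  exact mul_le_mul_of_nonneg_right (le_ciSup (Set.Finite.bddAbove (Set.finite_range _)) i)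
    (sq_nonneg _)

lemma rayleigh_ge (A : Matrix V V ℝ) (hA : A.IsHermitian) (x : V → ℝ) :
    (⨅ i, hA.eigenvalues i) * (x ⬝ᵥ x) ≤ x ⬝ᵥ A *ᵥ x := by
  obtain ⟨y, h1, h2⟩ := quad_expand A hA x
  rw [h1, h2, Finset.mul_sum]
  refine Finset.sum_le_sum fun i _ => ?_
  exact mul_le_mul_of_nonneg_right (ciInf_le (Set.Finite.bddBelow (Set.finite_range _)) i)
    (sq_nonneg _)

lemma quad_pvec (G : SimpleGraph V) [DecidableRel G.Adj] (S : Finset V) :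
    pvec S ⬝ᵥ G.adjMatrix ℝ *ᵥ pvec S
      = (fun _ => (1:ℝ)) ⬝ᵥ G.adjMatrix ℝ *ᵥ (fun _ => (1:ℝ)) - 4 * (cutNum G S : ℝ) := by
  have hcut : (cutNum G S : ℝ)
      = ∑ u : V, ∑ v : V, (if G.Adj u v ∧ u ∈ S ∧ v ∉ S then (1:ℝ) else 0) := by
    rw [cutNum, Finset.card_filter]
    push_cast
    rw [Fintype.sum_prod_type]
  have hswap : ∑ u : V, ∑ v : V, (if G.Adj u v ∧ u ∉ S ∧ v ∈ S then (1:ℝ) else 0)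
      = ∑ u : V, ∑ v : V, (if G.Adj u v ∧ u ∈ S ∧ v ∉ S then (1:ℝ) else 0) := by
    rw [Finset.sum_comm]
    refine Finset.sum_congr rfl fun u _ => Finset.sum_congr rfl fun v _ => ?_
    exact if_congr (by rw [G.adj_comm]; tauto) rfl rfl
  have key : ∀ u v : V, pvec S u * ((if G.Adj u v then (1:ℝ) else 0) * pvec S v)
      = (if G.Adj u v then (1:ℝ) else 0)
        - 2 * (if G.Adj u v ∧ u ∈ S ∧ v ∉ S then (1:ℝ) else 0)
        - 2 * (if G.Adj u v ∧ u ∉ S ∧ v ∈ S then (1:ℝ) else 0) := by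
    intro u v
    by_cases h1 : G.Adj u v <;> by_cases h2 : u ∈ S <;> by_cases h3 : v ∈ S <;>
      simp [pvec, h1, h2, h3] <;> ring
  simp only [dotProduct, mulVec, SimpleGraph.adjMatrix_apply, one_mul]
  calc ∑ u : V, pvec S u * ∑ v : V, (if G.Adj u v then (1:ℝ) else 0) * pvec S v
      = ∑ u : V, ∑ v : V, ((if G.Adj u v then (1:ℝ) else 0)
        - 2 * (if G.Adj u v ∧ u ∈ S ∧ v ∉ S then (1:ℝ) else 0)
        - 2 * (if G.Adj u v ∧ u ∉ S ∧ v ∈ S then (1:ℝ) else 0)) := by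
        refine Finset.sum_congr rfl fun u _ => ?_
        rw [Finset.mul_sum]
        exact Finset.sum_congr rfl fun v _ => key u v
    _ = (∑ u : V, ∑ v : V, (if G.Adj u v then (1:ℝ) else 0)) - 4 * (cutNum G S : ℝ) := by
        rw [hcut]
        simp only [Finset.sum_sub_distrib, ← Finset.mul_sum]
        rw [hswap]; ring
    _ = _ := by
        congr 1
        exact Finset.sum_congr rfl fun u _ => by simp

/-- `mcut(G) ≤ (n/4)·s_A(G)` where `s_A` is the adjacency spread. -/
theorem stmt5 (G : SimpleGraph V) [DecidableRel G.Adj] :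
    (mcut G : ℝ) ≤ (Fintype.card V : ℝ) / 4 * ((⨆ i, (isHermitian_adj G).eigenvalues i) - (⨅ i, (isHermitian_adj G).eigenvalues i)) := by
  obtain ⟨S, -, hS⟩ := Finset.exists_mem_eq_sup (Finset.univ : Finset (Finset V))
    ⟨∅, Finset.mem_univ _⟩ (fun S : Finset V => cutNum G S)
  rw [show mcut G = cutNum G S from hS]
  have hA := isHermitian_adj G
  have h1 := rayleigh_le (G.adjMatrix ℝ) hA (fun _ => (1:ℝ))
  have h2 := rayleigh_ge (G.adjMatrix ℝ) hA (pvec S)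
  have h3 := quad_pvec G S
  have hdot1 : (fun _ : V => (1:ℝ)) ⬝ᵥ (fun _ : V => (1:ℝ)) = (Fintype.card V : ℝ) := by
    simp [dotProduct, Finset.card_univ]
  have hdotp : pvec S ⬝ᵥ pvec S = (Fintype.card V : ℝ) := by
    have : ∀ v : V, pvec S v * pvec S v = 1 := fun v => by
      by_cases h : v ∈ S <;> simp [pvec, h]
    simp only [dotProduct]
    rw [Finset.sum_congr rfl fun v _ => this v]
    simp [Finset.card_univ]
  rw [hdot1] at h1
  rw [hdotp] at h2
  set s := ⨆ i, hA.eigenvalues i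
  set t := ⨅ i, hA.eigenvalues i
  have hid : (Fintype.card V : ℝ) / 4 * (s - t) = (s * (Fintype.card V : ℝ)
      - t * (Fintype.card V : ℝ)) / 4 := by ring
  rw [hid]
  linarith
end

section
/- Let H be an r-regular graph on n vertices. Then the join G = H ∇ (n+r)K_1 of H with n+r isolated vertices is A-exact, with least adjacency eigenvalue r - (n + r) = -n having the ±1 partition vector of {V(H), the isolated vertices} as an eigenvector. -/
open Finset Matrix BigOperators

set_option linter.unusedSectionVars false

variable {V : Type*} [Fintype V] [DecidableEq V]

variable {V : Type*} [Fintype V] [DecidableEq V]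

lemma quad_eq (G : SimpleGraph V) [DecidableRel G.Adj] (x : V → ℝ) :
    x ⬝ᵥ (G.adjMatrix ℝ *ᵥ x) = ∑ i, ∑ j, if G.Adj i j then x i * x j else 0 := by
  simp only [dotProduct, mulVec, SimpleGraph.adjMatrix_apply, Finset.mul_sum]
  refine Finset.sum_congr rfl fun i _ => Finset.sum_congr rfl fun j _ => ?_
  split <;> ring

lemma row_sum {r : ℕ} (G : SimpleGraph V) [DecidableRel G.Adj] (hreg : G.IsRegularOfDegree r)
    (i : V) (f : V → ℝ) : ∑ j, (if G.Adj i j then f i else 0) = r * f i := by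
  rw [Finset.sum_ite, Finset.sum_const, Finset.sum_const_zero, add_zero]
  have : (Finset.univ.filter (fun j => G.Adj i j)).card = r := by
    rw [← hreg i, SimpleGraph.degree]
    congr 1
    ext j; simp [SimpleGraph.mem_neighborFinset]
  rw [this]; simp [mul_comm]

lemma col_sum {r : ℕ} (G : SimpleGraph V) [DecidableRel G.Adj] (hreg : G.IsRegularOfDegree r)
    (f : V → ℝ) : ∑ i, ∑ j, (if G.Adj i j then f j else 0) = r * ∑ j, f j := by
  rw [Finset.sum_comm, Finset.mul_sum]
  refine Finset.sum_congr rfl fun j _ => ?_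
  rw [← row_sum G hreg j f]
  refine Finset.sum_congr rfl fun i _ => if_congr (G.adj_comm i j) rfl rfl

lemma row_sum' {r : ℕ} (G : SimpleGraph V) [DecidableRel G.Adj] (hreg : G.IsRegularOfDegree r)
    (f : V → ℝ) : ∑ i, ∑ j, (if G.Adj i j then f i else 0) = r * ∑ i, f i := by
  rw [Finset.mul_sum]
  exact Finset.sum_congr rfl fun i _ => row_sum G hreg i f

lemma psd_bound {r : ℕ} (G : SimpleGraph V) [DecidableRel G.Adj] (hreg : G.IsRegularOfDegree r)
    (y : V → ℝ) :
    -(r : ℝ) * ∑ i, y i ^ 2 ≤ ∑ i, ∑ j, if G.Adj i j then y i * y j else 0 := by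
  have h0 : (0:ℝ) ≤ ∑ i, ∑ j, if G.Adj i j then (y i + y j) ^ 2 else 0 := by
    refine Finset.sum_nonneg fun i _ => Finset.sum_nonneg fun j _ => ?_
    split <;> positivity
  have hexp : ∑ i, ∑ j, (if G.Adj i j then (y i + y j) ^ 2 else 0)
      = (∑ i, ∑ j, if G.Adj i j then (fun v => y v ^ 2) i else 0)
        + (∑ i, ∑ j, if G.Adj i j then (fun v => y v ^ 2) j else 0)
        + 2 * ∑ i, ∑ j, (if G.Adj i j then y i * y j else 0) := by
    rw [Finset.mul_sum, ← Finset.sum_add_distrib, ← Finset.sum_add_distrib]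
    refine Finset.sum_congr rfl fun i _ => ?_
    rw [Finset.mul_sum, ← Finset.sum_add_distrib, ← Finset.sum_add_distrib]
    refine Finset.sum_congr rfl fun j _ => ?_
    split <;> ring
  have h1 := row_sum' G hreg (fun v => y v ^ 2)
  have h2 := col_sum G hreg (fun v => y v ^ 2)
  rw [hexp, h1, h2] at h0
  linarith

lemma reg_quad {k r : ℕ} (H : SimpleGraph (Fin k)) [DecidableRel H.Adj]
    (hreg : H.IsRegularOfDegree r) (u : Fin k → ℝ) (hk : 0 < k) :
    2 * r * (∑ i, u i) ^ 2
      ≤ k * ((∑ i, ∑ j, if H.Adj i j then u i * u j else 0) + r * ∑ i, u i ^ 2) := by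
  set s := ∑ i, u i with hs
  have hy := psd_bound H hreg (fun i => k * u i - s)
  have hsq : ∑ i, ((k:ℝ) * u i - s) ^ 2
      = (k:ℝ)^2 * (∑ i, u i ^ 2) - 2 * k * s * s + k * s ^ 2 := by
    have : ∀ i ∈ Finset.univ, ((k:ℝ) * u i - s) ^ 2
        = (k:ℝ)^2 * u i ^ 2 - (2 * k * s) * u i + s ^ 2 := fun i _ => by ring
    rw [Finset.sum_congr rfl this, Finset.sum_add_distrib, Finset.sum_sub_distrib,
      ← Finset.mul_sum, ← Finset.mul_sum, Finset.sum_const, Finset.card_univ,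
      Fintype.card_fin, nsmul_eq_mul]
    try ring
  have hS : ∑ i, ∑ j, (if H.Adj i j then ((k:ℝ) * u i - s) * ((k:ℝ) * u j - s) else 0)
      = (k:ℝ)^2 * (∑ i, ∑ j, if H.Adj i j then u i * u j else 0)
        - 2 * ((k:ℝ) * s) * (r * s) + s ^ 2 * (r * k) := by
    have key : ∀ i ∈ Finset.univ, ∀ j ∈ (Finset.univ : Finset (Fin k)),
        (if H.Adj i j then ((k:ℝ) * u i - s) * ((k:ℝ) * u j - s) else 0)
        = (k:ℝ)^2 * (if H.Adj i j then u i * u j else 0)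
          - ((k:ℝ) * s) * (if H.Adj i j then u i else 0)
          - ((k:ℝ) * s) * (if H.Adj i j then u j else 0)
          + s ^ 2 * (if H.Adj i j then (1:ℝ) else 0) := by
      intro i _ j _; split <;> ring
    calc ∑ i, ∑ j, (if H.Adj i j then ((k:ℝ) * u i - s) * ((k:ℝ) * u j - s) else 0)
        = ∑ i, ∑ j, ((k:ℝ)^2 * (if H.Adj i j then u i * u j else 0)
          - ((k:ℝ) * s) * (if H.Adj i j then u i else 0)
          - ((k:ℝ) * s) * (if H.Adj i j then u j else 0)
          + s ^ 2 * (if H.Adj i j then (1:ℝ) else 0)) :=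
          Finset.sum_congr rfl fun i hi => Finset.sum_congr rfl (key i hi)
      _ = (k:ℝ)^2 * (∑ i, ∑ j, if H.Adj i j then u i * u j else 0)
          - ((k:ℝ) * s) * (∑ i, ∑ j, if H.Adj i j then u i else 0)
          - ((k:ℝ) * s) * (∑ i, ∑ j, if H.Adj i j then u j else 0)
          + s ^ 2 * (∑ i, ∑ j, if H.Adj i j then (1:ℝ) else 0) := by
          simp only [Finset.sum_add_distrib, Finset.sum_sub_distrib, ← Finset.mul_sum]
      _ = _ := by
          rw [row_sum' H hreg u, col_sum H hreg u, row_sum' H hreg (fun _ => (1:ℝ))]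
          rw [Finset.sum_const, Finset.card_univ, Fintype.card_fin, nsmul_eq_mul]
          try ring
  rw [hS, hsq] at hy
  have hk' : (0:ℝ) < k := by exact_mod_cast hk
  nlinarith [hy, hk', mul_pos hk' hk']

lemma join_quad {k r : ℕ} (H : SimpleGraph (Fin k)) [DecidableRel H.Adj]
    (x : Fin k ⊕ Fin (k + r) → ℝ) :
    x ⬝ᵥ ((joinGraph H (⊥ : SimpleGraph (Fin (k + r)))).adjMatrix ℝ *ᵥ x)
      = (∑ i, ∑ j, if H.Adj i j then x (Sum.inl i) * x (Sum.inl j) else 0)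
        + 2 * (∑ i, x (Sum.inl i)) * (∑ j, x (Sum.inr j)) := by
  rw [quad_eq, Fintype.sum_sum_type]
  have h1 : ∀ a : Fin k,
      (∑ b : Fin k ⊕ Fin (k + r),
        if (joinGraph H (⊥ : SimpleGraph (Fin (k + r)))).Adj (Sum.inl a) b
          then x (Sum.inl a) * x b else 0)
      = (∑ j, if H.Adj a j then x (Sum.inl a) * x (Sum.inl j) else 0)
        + x (Sum.inl a) * ∑ j, x (Sum.inr j) := by
    intro a
    rw [Fintype.sum_sum_type]
    congr 1
    rw [Finset.mul_sum]
    exact Finset.sum_congr rfl fun j _ => if_pos trivial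
  have h2 : ∀ a : Fin (k + r),
      (∑ b : Fin k ⊕ Fin (k + r),
        if (joinGraph H (⊥ : SimpleGraph (Fin (k + r)))).Adj (Sum.inr a) b
          then x (Sum.inr a) * x b else 0)
      = x (Sum.inr a) * ∑ j, x (Sum.inl j) := by
    intro a
    rw [Fintype.sum_sum_type]
    have hz : (∑ j : Fin (k + r),
        if (joinGraph H (⊥ : SimpleGraph (Fin (k + r)))).Adj (Sum.inr a) (Sum.inr j)
          then x (Sum.inr a) * x (Sum.inr j) else 0) = 0 :=
      Finset.sum_eq_zero fun j _ => if_neg (fun h => h)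
    rw [hz, add_zero, Finset.mul_sum]
    exact Finset.sum_congr rfl fun j _ => if_pos trivial
  rw [Finset.sum_congr rfl fun a _ => h1 a, Finset.sum_congr rfl fun a _ => h2 a,
    Finset.sum_add_distrib, ← Finset.sum_mul, ← Finset.sum_mul]
  ring

lemma join_quad_lb {k r : ℕ} (H : SimpleGraph (Fin k)) [DecidableRel H.Adj]
    (hreg : H.IsRegularOfDegree r) (x : Fin k ⊕ Fin (k + r) → ℝ) :
    -(k : ℝ) * (x ⬝ᵥ x) ≤ x ⬝ᵥ ((joinGraph H (⊥ : SimpleGraph (Fin (k + r)))).adjMatrix ℝ *ᵥ x) := by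
  have hxx : x ⬝ᵥ x = (∑ i, x (Sum.inl i) ^ 2) + ∑ j, x (Sum.inr j) ^ 2 := by
    rw [dotProduct, Fintype.sum_sum_type]
    congr 1 <;> exact Finset.sum_congr rfl fun a _ => (sq (x _)).symm
  rw [join_quad, hxx]
  set u : Fin k → ℝ := fun i => x (Sum.inl i) with hu
  set w : Fin (k + r) → ℝ := fun j => x (Sum.inr j) with hw
  set Q := ∑ i, ∑ j, if H.Adj i j then u i * u j else 0 with hQ
  set s := ∑ i, u i with hs
  set t := ∑ j, w j with ht
  set U := ∑ i, u i ^ 2 with hU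
  set W := ∑ j, w j ^ 2 with hW
  rcases Nat.eq_zero_or_pos k with hk | hk
  · subst hk
    have hs0 : s = 0 := by rw [hs]; exact Finset.sum_of_isEmpty _
    have hU0 : U = 0 := by rw [hU]; exact Finset.sum_of_isEmpty _
    have hQ0 : Q = 0 := by rw [hQ]; exact Finset.sum_of_isEmpty _
    have hW0 : 0 ≤ W := Finset.sum_nonneg fun j _ => sq_nonneg _
    rw [hs0, hQ0]
    push_cast
    nlinarith [hW0, hU0]
  · have hrk : r < k := by
      have hv : (⟨0, hk⟩ : Fin k) = ⟨0, hk⟩ := rfl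
      have := H.degree_lt_card_verts ⟨0, hk⟩
      rwa [hreg ⟨0, hk⟩, Fintype.card_fin] at this
    have hk' : (0:ℝ) < k := by exact_mod_cast hk
    have hkr' : (0:ℝ) < (k:ℝ) + r := by positivity
    have hrk' : (r:ℝ) < k := by exact_mod_cast hrk
    have h1 : 2 * r * s ^ 2 ≤ k * (Q + r * U) := reg_quad H hreg u hk
    have h2 : s ^ 2 ≤ k * U := by
      have := sq_sum_le_card_mul_sum_sq (s := (Finset.univ : Finset (Fin k))) (f := u)
      simpa [hs, hU] using this
    have h3 : t ^ 2 ≤ ((k : ℝ) + r) * W := by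
      have := sq_sum_le_card_mul_sum_sq (s := (Finset.univ : Finset (Fin (k + r)))) (f := w)
      rw [Finset.card_univ, Fintype.card_fin] at this
      push_cast at this ⊢
      simpa [ht, hW] using this
    have e1 : 0 ≤ ((k:ℝ) + r) * (k * (Q + r * U) - 2 * r * s ^ 2) :=
      mul_nonneg (le_of_lt hkr') (by linarith)
    have e2 : 0 ≤ (((k:ℝ) + r) * ((k:ℝ) - r)) * (k * U - s ^ 2) :=
      mul_nonneg (mul_nonneg (le_of_lt hkr') (by linarith)) (by linarith)
    have e3 : 0 ≤ (k:ℝ)^2 * (((k:ℝ) + r) * W - t ^ 2) :=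
      mul_nonneg (by positivity) (by linarith)
    have e4 : (0:ℝ) ≤ (((k:ℝ) + r) * s + k * t) ^ 2 := sq_nonneg _
    nlinarith [e1, e2, e3, e4, mul_pos hk' hkr']

lemma eig_lb {n : Type*} [Fintype n] [DecidableEq n] {A : Matrix n n ℝ} (hA : A.IsHermitian)
    {c : ℝ} (h : ∀ x : n → ℝ, c * (x ⬝ᵥ x) ≤ x ⬝ᵥ (A *ᵥ x)) (i : n) : c ≤ hA.eigenvalues i := by
  set v : n → ℝ := ⇑(hA.eigenvectorBasis i) with hv
  have hnorm : ‖(hA.eigenvectorBasis i : EuclideanSpace ℝ n)‖ = 1 :=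
    hA.eigenvectorBasis.orthonormal.1 i
  have hvv : v ⬝ᵥ v = 1 := by
    have h1 : (inner ℝ (hA.eigenvectorBasis i) (hA.eigenvectorBasis i) : ℝ) = 1 := by
      rw [real_inner_self_eq_norm_sq, hnorm]; norm_num
    rw [← h1, PiLp.inner_apply]
    exact Finset.sum_congr rfl fun a _ => by simp only [RCLike.inner_apply, conj_trivial]; rfl
  have hAv : A *ᵥ v = hA.eigenvalues i • v := hA.mulVec_eigenvectorBasis i
  have := h v
  rw [hAv, dotProduct_smul, smul_eq_mul, hvv, mul_one, mul_one] at this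
  exact this

lemma eig_mem {n : Type*} [Fintype n] [DecidableEq n] {A : Matrix n n ℝ} (hA : A.IsHermitian)
    {μ : ℝ} {v : n → ℝ} (hv : v ≠ 0) (hAv : A *ᵥ v = μ • v) : ∃ i, hA.eigenvalues i = μ := by
  have h1 : Module.End.HasEigenvalue (Matrix.toLin' A) μ :=
    Module.End.hasEigenvalue_of_hasEigenvector
      ⟨Module.End.mem_eigenspace_iff.mpr (by rw [Matrix.toLin'_apply, hAv]), hv⟩
  have h2 : μ ∈ spectrum ℝ A := by
    rw [← AlgEquiv.spectrum_eq (Matrix.toLinAlgEquiv' : Matrix n n ℝ ≃ₐ[ℝ] _) A]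
    exact h1.mem_spectrum
  rw [hA.spectrum_real_eq_range_eigenvalues] at h2
  exact h2

lemma degree_eq_sum (G : SimpleGraph V) [DecidableRel G.Adj] (a : V) :
    G.degree a = ∑ b, if G.Adj a b then 1 else 0 := by
  rw [← Finset.card_filter, SimpleGraph.degree]
  congr 1
  ext b; simp [SimpleGraph.mem_neighborFinset]

lemma two_mul_card_edges (G : SimpleGraph V) [DecidableRel G.Adj] :
    2 * G.edgeFinset.card = ∑ a, ∑ b, if G.Adj a b then 1 else 0 := by
  rw [← SimpleGraph.sum_degrees_eq_twice_card_edges]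
  exact Finset.sum_congr rfl fun a _ => degree_eq_sum G a

lemma cross_card (G : SimpleGraph V) [DecidableRel G.Adj] (S : Finset V) :
    (Finset.univ.filter (fun p : V × V => G.Adj p.1 p.2 ∧ p.1 ∉ S ∧ p.2 ∈ S)).card
      = cutNum G S := by
  unfold cutNum
  apply Finset.card_bij' (fun p _ => Prod.swap p) (fun p _ => Prod.swap p)
  · intro p hp
    simp only [Finset.mem_filter, Finset.mem_univ, true_and] at hp ⊢
    exact ⟨hp.1.symm, hp.2.2, hp.2.1⟩
  · intro p hp
    simp only [Finset.mem_filter, Finset.mem_univ, true_and] at hp ⊢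
    exact ⟨hp.1.symm, hp.2.2, hp.2.1⟩
  · intro p _; exact Prod.swap_swap p
  · intro p _; exact Prod.swap_swap p

lemma pvec_quad (G : SimpleGraph V) [DecidableRel G.Adj] (S : Finset V) :
    (pvec S) ⬝ᵥ (G.adjMatrix ℝ *ᵥ pvec S)
      = 2 * (G.edgeFinset.card : ℝ) - 4 * (cutNum G S : ℝ) := by
  rw [quad_eq]
  have key : ∀ a b : V, (if G.Adj a b then pvec S a * pvec S b else 0)
      = (if G.Adj a b then (1:ℝ) else 0)
        - 2 * (if G.Adj a b ∧ a ∈ S ∧ b ∉ S then (1:ℝ) else 0)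
        - 2 * (if G.Adj a b ∧ a ∉ S ∧ b ∈ S then (1:ℝ) else 0) := by
    intro a b
    by_cases h1 : G.Adj a b <;> by_cases h2 : a ∈ S <;> by_cases h3 : b ∈ S <;>
      simp [pvec, h1, h2, h3] <;> norm_num
  have hsum1 : ∑ a, ∑ b, (if G.Adj a b then (1:ℝ) else 0) = 2 * (G.edgeFinset.card : ℝ) := by
    calc ∑ a, ∑ b, (if G.Adj a b then (1:ℝ) else 0)
        = ((∑ a, ∑ b, if G.Adj a b then 1 else 0 : ℕ) : ℝ) := by push_cast; rfl
      _ = ((2 * G.edgeFinset.card : ℕ) : ℝ) := by rw [two_mul_card_edges G]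
      _ = 2 * (G.edgeFinset.card : ℝ) := by push_cast; ring
  have hsplit : ∀ (P : V × V → Prop) [DecidablePred P],
      ∑ a, ∑ b, (if P (a, b) then (1:ℝ) else 0) = ((Finset.univ.filter P).card : ℝ) := by
    intro P _
    have h : (Finset.univ.filter P).card = ∑ p : V × V, if P p then 1 else 0 :=
      Finset.card_filter _ _
    rw [h]
    push_cast
    rw [← Finset.univ_product_univ, Finset.sum_product]
  calc ∑ a, ∑ b, (if G.Adj a b then pvec S a * pvec S b else 0)
      = ∑ a, ∑ b, ((if G.Adj a b then (1:ℝ) else 0)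
        - 2 * (if G.Adj a b ∧ a ∈ S ∧ b ∉ S then (1:ℝ) else 0)
        - 2 * (if G.Adj a b ∧ a ∉ S ∧ b ∈ S then (1:ℝ) else 0)) :=
        Finset.sum_congr rfl fun a _ => Finset.sum_congr rfl fun b _ => key a b
    _ = (∑ a, ∑ b, (if G.Adj a b then (1:ℝ) else 0))
        - 2 * (∑ a, ∑ b, (if G.Adj a b ∧ a ∈ S ∧ b ∉ S then (1:ℝ) else 0))
        - 2 * (∑ a, ∑ b, (if G.Adj a b ∧ a ∉ S ∧ b ∈ S then (1:ℝ) else 0)) := by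
        simp only [Finset.sum_sub_distrib, ← Finset.mul_sum]
    _ = 2 * (G.edgeFinset.card : ℝ) - 4 * (cutNum G S : ℝ) := by
        rw [hsum1, hsplit (fun p : V × V => G.Adj p.1 p.2 ∧ p.1 ∈ S ∧ p.2 ∉ S),
          hsplit (fun p : V × V => G.Adj p.1 p.2 ∧ p.1 ∉ S ∧ p.2 ∈ S)]
        have e1 : (Finset.univ.filter
            (fun p : V × V => G.Adj p.1 p.2 ∧ p.1 ∈ S ∧ p.2 ∉ S)).card = cutNum G S := by
          unfold cutNum; rfl
        have e2 : (Finset.univ.filter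
            (fun p : V × V => G.Adj p.1 p.2 ∧ p.1 ∉ S ∧ p.2 ∈ S)).card = cutNum G S := by
          rw [← cross_card G S]
        rw [e1, e2]; ring

lemma join_edges {k r : ℕ} (H : SimpleGraph (Fin k)) [DecidableRel H.Adj]
    (hreg : H.IsRegularOfDegree r) :
    2 * (joinGraph H (⊥ : SimpleGraph (Fin (k + r)))).edgeFinset.card
      = k * r + 2 * (k * (k + r)) := by
  rw [two_mul_card_edges, Fintype.sum_sum_type]
  have hA : ∀ i : Fin k,
      (∑ b : Fin k ⊕ Fin (k + r),
        if (joinGraph H (⊥ : SimpleGraph (Fin (k + r)))).Adj (Sum.inl i) b then 1 else 0)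
      = r + (k + r) := by
    intro i
    rw [Fintype.sum_sum_type]
    congr 1
    · calc (∑ a₁ : Fin k,
            if (joinGraph H (⊥ : SimpleGraph (Fin (k + r)))).Adj (Sum.inl i) (Sum.inl a₁)
              then 1 else 0)
          = ∑ a₁ : Fin k, if H.Adj i a₁ then 1 else 0 := rfl
        _ = r := by rw [← degree_eq_sum H i, hreg i]
    · have hone : ∀ b ∈ (Finset.univ : Finset (Fin (k + r))),
          (if (joinGraph H (⊥ : SimpleGraph (Fin (k + r)))).Adj (Sum.inl i) (Sum.inr b)
            then 1 else 0) = 1 := fun b _ => if_pos trivial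
      rw [Finset.sum_congr rfl hone, Finset.sum_const, Finset.card_univ, Fintype.card_fin,
        smul_eq_mul, mul_one]
  have hB : ∀ j : Fin (k + r),
      (∑ b : Fin k ⊕ Fin (k + r),
        if (joinGraph H (⊥ : SimpleGraph (Fin (k + r)))).Adj (Sum.inr j) b then 1 else 0)
      = k := by
    intro j
    rw [Fintype.sum_sum_type]
    have h1 : (∑ b : Fin k, if (joinGraph H (⊥ : SimpleGraph (Fin (k + r)))).Adj
        (Sum.inr j) (Sum.inl b) then 1 else 0) = k := by
      have hone : ∀ b ∈ (Finset.univ : Finset (Fin k)),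
          (if (joinGraph H (⊥ : SimpleGraph (Fin (k + r)))).Adj (Sum.inr j) (Sum.inl b)
            then 1 else 0) = 1 := fun b _ => if_pos trivial
      rw [Finset.sum_congr rfl hone, Finset.sum_const, Finset.card_univ, Fintype.card_fin,
        smul_eq_mul, mul_one]
    have h2 : (∑ b : Fin (k + r), if (joinGraph H (⊥ : SimpleGraph (Fin (k + r)))).Adj
        (Sum.inr j) (Sum.inr b) then 1 else 0) = 0 :=
      Finset.sum_eq_zero fun b _ => if_neg (fun h => h)
    rw [h1, h2, Nat.add_zero]

  rw [Finset.sum_congr rfl fun i _ => hA i, Finset.sum_congr rfl fun j _ => hB j,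
    Finset.sum_const, Finset.sum_const, Finset.card_univ, Finset.card_univ,
    Fintype.card_fin, Fintype.card_fin, smul_eq_mul, smul_eq_mul]
  ring

lemma cut_S0 {k r : ℕ} (H : SimpleGraph (Fin k)) [DecidableRel H.Adj] :
    cutNum (joinGraph H (⊥ : SimpleGraph (Fin (k + r))))
      ((Finset.univ : Finset (Fin k)).image Sum.inl) = k * (k + r) := by
  unfold cutNum
  have hset : (Finset.univ.filter
      (fun p : (Fin k ⊕ Fin (k + r)) × (Fin k ⊕ Fin (k + r)) =>
        (joinGraph H (⊥ : SimpleGraph (Fin (k + r)))).Adj p.1 p.2 ∧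
          p.1 ∈ (Finset.univ : Finset (Fin k)).image Sum.inl ∧
          p.2 ∉ (Finset.univ : Finset (Fin k)).image Sum.inl))
      = Finset.univ.image
          (fun q : Fin k × Fin (k + r) => ((Sum.inl q.1 : Fin k ⊕ Fin (k + r)), Sum.inr q.2)) := by
    ext ⟨a, b⟩
    cases a <;> cases b <;>
      simp only [Finset.mem_filter, Finset.mem_univ, true_and, Finset.mem_image] <;>
      simp [joinGraph, Prod.ext_iff] <;> tauto
  rw [hset, Finset.card_image_of_injective _ (fun a b h => by
    simpa [Prod.ext_iff] using h), Finset.card_univ, Fintype.card_prod,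
    Fintype.card_fin, Fintype.card_fin]

lemma join_eigvec {k r : ℕ} (H : SimpleGraph (Fin k)) [DecidableRel H.Adj]
    (hreg : H.IsRegularOfDegree r) :
    (joinGraph H (⊥ : SimpleGraph (Fin (k + r)))).adjMatrix ℝ *ᵥ
        pvec ((Finset.univ : Finset (Fin k)).image Sum.inl)
      = (-(k : ℝ)) • pvec ((Finset.univ : Finset (Fin k)).image Sum.inl) := by
  funext a
  have hp1 : ∀ i : Fin k, pvec (V := Fin k ⊕ Fin (k + r))
      ((Finset.univ : Finset (Fin k)).image Sum.inl) (Sum.inl i) = 1 := by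
    intro i; simp [pvec]
  have hp2 : ∀ j : Fin (k + r), pvec (V := Fin k ⊕ Fin (k + r))
      ((Finset.univ : Finset (Fin k)).image Sum.inl) ((Sum.inr j : Fin k ⊕ Fin (k + r))) = -1 := by
    intro j; simp [pvec]
  cases a with
  | inl i =>
    simp only [mulVec, dotProduct, SimpleGraph.adjMatrix_apply, Pi.smul_apply, smul_eq_mul]
    rw [Fintype.sum_sum_type]
    have h1 : (∑ j : Fin k, (if (joinGraph H (⊥ : SimpleGraph (Fin (k + r)))).Adj
        (Sum.inl i) (Sum.inl j) then (1:ℝ) else 0) *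
          pvec (V := Fin k ⊕ Fin (k + r)) ((Finset.univ : Finset (Fin k)).image Sum.inl) (Sum.inl j)) = r := by
      rw [Finset.sum_congr rfl fun j _ => by rw [hp1 j, mul_one]]
      have := row_sum H hreg i (fun _ => (1:ℝ))
      simpa [joinGraph] using this
    have h2 : (∑ j : Fin (k + r), (if (joinGraph H (⊥ : SimpleGraph (Fin (k + r)))).Adj
        (Sum.inl i) (Sum.inr j) then (1:ℝ) else 0) *
          pvec (V := Fin k ⊕ Fin (k + r)) ((Finset.univ : Finset (Fin k)).image Sum.inl) (Sum.inr j)) = -(k + r : ℝ) := by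
      have hone : ∀ j ∈ (Finset.univ : Finset (Fin (k + r))),
          (if (joinGraph H (⊥ : SimpleGraph (Fin (k + r)))).Adj (Sum.inl i) (Sum.inr j)
            then (1:ℝ) else 0) *
            pvec (V := Fin k ⊕ Fin (k + r)) ((Finset.univ : Finset (Fin k)).image Sum.inl)
              (Sum.inr j) = -1 := by
        intro j _
        rw [hp2 j, if_pos (show (joinGraph H (⊥ : SimpleGraph (Fin (k + r)))).Adj
          (Sum.inl i) (Sum.inr j) from trivial)]
        ring
      rw [Finset.sum_congr rfl hone, Finset.sum_const, Finset.card_univ, Fintype.card_fin]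
      push_cast; ring
    rw [h1, h2, hp1 i]
    push_cast; ring
  | inr j =>
    simp only [mulVec, dotProduct, SimpleGraph.adjMatrix_apply, Pi.smul_apply, smul_eq_mul]
    rw [Fintype.sum_sum_type]
    have h1 : (∑ i : Fin k, (if (joinGraph H (⊥ : SimpleGraph (Fin (k + r)))).Adj
        (Sum.inr j) (Sum.inl i) then (1:ℝ) else 0) *
          pvec (V := Fin k ⊕ Fin (k + r)) ((Finset.univ : Finset (Fin k)).image Sum.inl) (Sum.inl i)) = k := by
      have hone : ∀ i ∈ (Finset.univ : Finset (Fin k)),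
          (if (joinGraph H (⊥ : SimpleGraph (Fin (k + r)))).Adj (Sum.inr j) (Sum.inl i)
            then (1:ℝ) else 0) *
            pvec (V := Fin k ⊕ Fin (k + r)) ((Finset.univ : Finset (Fin k)).image Sum.inl)
              (Sum.inl i) = 1 := by
        intro i _
        rw [hp1 i, if_pos (show (joinGraph H (⊥ : SimpleGraph (Fin (k + r)))).Adj
          (Sum.inr j) (Sum.inl i) from trivial)]
        ring
      rw [Finset.sum_congr rfl hone, Finset.sum_const, Finset.card_univ, Fintype.card_fin,
        nsmul_eq_mul, mul_one]
    have h2 : (∑ b : Fin (k + r), (if (joinGraph H (⊥ : SimpleGraph (Fin (k + r)))).Adj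
        (Sum.inr j) (Sum.inr b) then (1:ℝ) else 0) *
          pvec (V := Fin k ⊕ Fin (k + r)) ((Finset.univ : Finset (Fin k)).image Sum.inl) (Sum.inr b)) = 0 :=
      Finset.sum_eq_zero fun b _ => by
        rw [show (if (joinGraph H (⊥ : SimpleGraph (Fin (k + r)))).Adj (Sum.inr j) (Sum.inr b)
          then (1:ℝ) else 0) = 0 from if_neg (fun h => h), zero_mul]
    rw [h1, h2, hp2 j]
    ring
/-- The join of an `r`-regular graph on `k` vertices with `k + r` isolated vertices is `A`-exact,
with least adjacency eigenvalue `r - (k + r) = -k` whose eigenvector is the ±1 partition vector. -/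
theorem stmt19 {k r : ℕ} (H : SimpleGraph (Fin k)) [DecidableRel H.Adj]
    (hreg : H.IsRegularOfDegree r) :
    (⨅ i, (isHermitian_adj (joinGraph H (⊥ : SimpleGraph (Fin (k + r))))).eigenvalues i) =
        -(k : ℝ) ∧
      (joinGraph H (⊥ : SimpleGraph (Fin (k + r)))).adjMatrix ℝ *ᵥ
          pvec (Finset.univ.image Sum.inl) =
        (-(k : ℝ)) • pvec (Finset.univ.image Sum.inl) ∧
      (⨅ i, (isHermitian_adj (joinGraph H (⊥ : SimpleGraph (Fin (k + r))))).eigenvalues i) =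
        2 / (Fintype.card (Fin k ⊕ Fin (k + r)) : ℝ) *
          (((joinGraph H (⊥ : SimpleGraph (Fin (k + r)))).edgeFinset.card : ℝ) -
            2 * mcut (joinGraph H (⊥ : SimpleGraph (Fin (k + r))))) := by
  set G := joinGraph H (⊥ : SimpleGraph (Fin (k + r))) with hG
  have hA := isHermitian_adj G
  have hvec := join_eigvec H hreg
  have hlb : ∀ i, -(k : ℝ) ≤ hA.eigenvalues i := eig_lb hA (join_quad_lb H hreg)
  have hcard : Fintype.card (Fin k ⊕ Fin (k + r)) = k + (k + r) := by
    rw [Fintype.card_sum, Fintype.card_fin, Fintype.card_fin]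
  have hEr : 2 * ((G.edgeFinset.card : ℕ) : ℝ)
      = (k : ℝ) * r + 2 * ((k : ℝ) * ((k : ℝ) + r)) := by
    have := join_edges H hreg
    have h2 : ((2 * G.edgeFinset.card : ℕ) : ℝ) = ((k * r + 2 * (k * (k + r)) : ℕ) : ℝ) := by
      exact_mod_cast congrArg (fun m : ℕ => (m : ℝ)) this
    push_cast at h2
    linarith
  have hinf : (⨅ i, hA.eigenvalues i) = -(k : ℝ) := by
    rcases isEmpty_or_nonempty (Fin k ⊕ Fin (k + r)) with he | hne
    · have hk0 : k = 0 := by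
        by_contra hk
        exact he.elim (Sum.inl ⟨0, Nat.pos_of_ne_zero hk⟩)
      rw [Real.iInf_of_isEmpty, hk0]
      norm_num
    · have hpne : pvec (V := Fin k ⊕ Fin (k + r)) (Finset.univ.image Sum.inl) ≠ 0 := by
        intro h0
        obtain a := Classical.arbitrary (Fin k ⊕ Fin (k + r))
        have := congrFun h0 a
        simp only [pvec, Pi.zero_apply] at this
        split_ifs at this <;> norm_num at this
      obtain ⟨i0, hi0⟩ := eig_mem hA hpne hvec
      refine le_antisymm ?_ (le_ciInf hlb)
      have hbdd : BddBelow (Set.range hA.eigenvalues) := by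
        refine ⟨-(k : ℝ), ?_⟩
        rintro y ⟨i, rfl⟩
        exact hlb i
      calc (⨅ i, hA.eigenvalues i) ≤ hA.eigenvalues i0 := ciInf_le hbdd i0
        _ = -(k : ℝ) := hi0
  have hmcut : mcut G = k * (k + r) := by
    refine le_antisymm (Finset.sup_le fun S _ => ?_) ?_
    · have hq := join_quad_lb H hreg (pvec S)
      have hpp : pvec S ⬝ᵥ pvec S = ((k : ℝ) + ((k : ℝ) + r)) := by
        have h1 : ∀ a ∈ (Finset.univ : Finset (Fin k ⊕ Fin (k + r))),
            pvec S a * pvec S a = 1 := by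
          intro a _; by_cases h : a ∈ S <;> simp [pvec, h]
        rw [dotProduct, Finset.sum_congr rfl h1, Finset.sum_const, Finset.card_univ, hcard]
        push_cast; ring
      rw [pvec_quad, hpp] at hq
      have hle : (cutNum G S : ℝ) ≤ ((k * (k + r) : ℕ) : ℝ) := by
        push_cast
        nlinarith [hq, hEr]
      exact_mod_cast hle
    · calc k * (k + r) = cutNum G (Finset.univ.image Sum.inl) := (cut_S0 H).symm
        _ ≤ mcut G := Finset.le_sup (Finset.mem_univ _)
  refine ⟨hinf, hvec, ?_⟩
  rw [hinf, hmcut, hcard]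
  rcases Nat.eq_zero_or_pos (k + (k + r)) with hn | hn
  · have hk0 : k = 0 := by omega
    have hr0 : r = 0 := by omega
    subst hk0; subst hr0
    norm_num
  · have hn' : ((k + (k + r) : ℕ) : ℝ) ≠ 0 := by
      exact_mod_cast Nat.pos_iff_ne_zero.mp hn
    rw [eq_comm, div_mul_eq_mul_div, div_eq_iff hn']
    push_cast at hn' ⊢
    nlinarith [hEr]
end
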